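/- Let β ∈ ℝ with β ≠ 0 and let ρ : ℝ → ℝ be the Fermi–Dirac function ρ(x) := 1/(1 + e^{−x}). Let H be a bounded selfadjoint operator on ℌ with Γ∘H∘Γ = −H, and set T := ρ(βH) via the continuous functional calculus, i.e. T = χ(H) where χ(x) := 1/(1 + e^{−βx}). Then: (i) if T ∘ U_φ = U_φ ∘ T for all φ ∈ ℝ, there exists a bounded selfadjoint operator h on 𝔥 such that H(f, g) = (hf, −ζ(h(ζg))) for all (f, g) ∈ ℌ; (ii) conversely, if H(f, g) = (hf, −ζ(h(ζg))) for a bounded selfadjoint h on 𝔥, then T(f, g) = ((1 − s)f, ζ(s(ζg))) for all (f, g) ∈ ℌ, where s := ψ(h) is the continuous functional calculus of h for ψ(x) := 1/(1 + e^{βx}) (i.e. s = ρ(−βh)). -/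

import Mathlib

set_option maxHeartbeats 1000000
set_option synthInstance.maxHeartbeats 400000


noncomputable section

/-- `𝔥 := ℓ²(ℤ)`, the Hilbert space of square-summable complex-valued functions on `ℤ`. -/
abbrev smallH : Type := lp (fun _ : ℤ => ℂ) 2

/-- `ℌ := 𝔥 ⊕ 𝔥`, the Hilbert space direct sum of `𝔥` with itself. -/
abbrev bigH : Type := WithLp 2 (smallH × smallH)

/-- The `ℝ`-algebra structure obtained by restricting scalars from `ℂ` (port fix: lets the
real continuous functional calculus be found on operators on `𝔥`). -/
instance smallHOpRealAlgebra : Algebra ℝ (smallH →L[ℂ] smallH) :=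
  NormedAlgebra.complexToReal.toAlgebra

/-- The `ℝ`-algebra structure obtained by restricting scalars from `ℂ` (port fix: lets the
real continuous functional calculus be found on operators on `ℌ`). -/
instance bigHOpRealAlgebra : Algebra ℝ (bigH →L[ℂ] bigH) :=
  NormedAlgebra.complexToReal.toAlgebra

/-- `ζ`, the coordinatewise complex conjugation on `𝔥`. -/
def zeta (f : smallH) : smallH := star f

/-- Identification of an element of `ℌ` with a pair. -/
def toPair (x : bigH) : smallH × smallH := WithLp.equiv 2 (smallH × smallH) x

/-- Identification of a pair with an element of `ℌ`. -/
def ofPair (p : smallH × smallH) : bigH := (WithLp.equiv 2 (smallH × smallH)).symm p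

/-- The conjugation `Γ(f, g) := (ζg, ζf)` on `ℌ`. -/
def Gamma (x : bigH) : bigH := ofPair (zeta (toPair x).2, zeta (toPair x).1)

/-- `T` commutes with all gauge transformations `U_φ(f, g) := (e^{iφ}f, e^{−iφ}g)`. -/
def GaugeInvariant (T : bigH →L[ℂ] bigH) : Prop :=
  ∀ (φ : ℝ) (f g : smallH),
    toPair (T (ofPair
        (Complex.exp (Complex.I * φ) • f, Complex.exp (-(Complex.I * φ)) • g))) =
      (Complex.exp (Complex.I * φ) • (toPair (T (ofPair (f, g)))).1,
        Complex.exp (-(Complex.I * φ)) • (toPair (T (ofPair (f, g)))).2)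


namespace Stmt5Aux

abbrev OpS := smallH →L[ℂ] smallH
abbrev OpB := bigH →L[ℂ] bigH

def eqv : bigH ≃L[ℂ] smallH × smallH := WithLp.prodContinuousLinearEquiv 2 ℂ smallH smallH

def pr1 : bigH →L[ℂ] smallH := (ContinuousLinearMap.fst ℂ smallH smallH).comp (eqv : bigH →L[ℂ] smallH × smallH)
def pr2 : bigH →L[ℂ] smallH := (ContinuousLinearMap.snd ℂ smallH smallH).comp (eqv : bigH →L[ℂ] smallH × smallH)
def in1 : smallH →L[ℂ] bigH := (eqv.symm : smallH × smallH →L[ℂ] bigH).comp (ContinuousLinearMap.inl ℂ smallH smallH)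
def in2 : smallH →L[ℂ] bigH := (eqv.symm : smallH × smallH →L[ℂ] bigH).comp (ContinuousLinearMap.inr ℂ smallH smallH)

@[simp] lemma toPair_ofPair (p : smallH × smallH) : toPair (ofPair p) = p := rfl
@[simp] lemma ofPair_toPair (x : bigH) : ofPair (toPair x) = x := rfl
@[simp] lemma pr1_apply (x : bigH) : pr1 x = (toPair x).1 := rfl
@[simp] lemma pr2_apply (x : bigH) : pr2 x = (toPair x).2 := rfl
@[simp] lemma in1_apply (f : smallH) : in1 f = ofPair (f, 0) := rfl
@[simp] lemma in2_apply (f : smallH) : in2 f = ofPair (0, f) := rfl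
@[simp] lemma ofPair_add (p q : smallH × smallH) : ofPair p + ofPair q = ofPair (p + q) := rfl
@[simp] lemma ofPair_fst (p : smallH × smallH) : (ofPair p).fst = p.1 := rfl
@[simp] lemma ofPair_snd (p : smallH × smallH) : (ofPair p).snd = p.2 := rfl
@[simp] lemma ofLp_ofPair (p : smallH × smallH) : WithLp.ofLp (ofPair p) = p := rfl

def diagOp (a b : OpS) : OpB := in1.comp (a.comp pr1) + in2.comp (b.comp pr2)

lemma diagOp_apply (a b : OpS) (x : bigH) :
    diagOp a b x = ofPair (a (toPair x).1, b (toPair x).2) := by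
  simp [diagOp]

@[simp] lemma diagOp_apply' (a b : OpS) (p : smallH × smallH) :
    diagOp a b (ofPair p) = ofPair (a p.1, b p.2) := by
  rw [diagOp_apply]; rfl

lemma diagOp_one : diagOp 1 1 = 1 := by
  ext x : 1
  rw [diagOp_apply]
  rfl

lemma diagOp_zero : diagOp 0 0 = 0 := by
  ext x : 1
  rw [diagOp_apply]
  rfl

lemma diagOp_mul (a b a' b' : OpS) : diagOp a b * diagOp a' b' = diagOp (a * a') (b * b') := by
  ext x : 1
  simp only [ContinuousLinearMap.mul_apply, diagOp_apply, toPair_ofPair]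

lemma diagOp_add (a b a' b' : OpS) : diagOp a b + diagOp a' b' = diagOp (a + a') (b + b') := by
  ext x : 1
  simp only [ContinuousLinearMap.add_apply, diagOp_apply, ofPair_add, Prod.mk_add_mk]

lemma diagOp_sub (a b a' b' : OpS) : diagOp a b - diagOp a' b' = diagOp (a - a') (b - b') := by
  ext x : 1
  simp only [ContinuousLinearMap.sub_apply, diagOp_apply]
  apply (WithLp.equiv 2 _).symm.injective.eq_iff.mpr
  rfl

lemma diagOp_smul (r : ℝ) (a b : OpS) : diagOp (r • a) (r • b) = r • diagOp a b := by
  ext x : 1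
  simp only [ContinuousLinearMap.smul_apply, diagOp_apply]
  rfl

lemma diagOp_algebraMap (r : ℝ) :
    diagOp (algebraMap ℝ OpS r) (algebraMap ℝ OpS r) = algebraMap ℝ OpB r := by
  ext x : 1
  rw [diagOp_apply]
  rfl

lemma isSelfAdjoint_diagOp {a b : OpS} (ha : IsSelfAdjoint a) (hb : IsSelfAdjoint b) :
    IsSelfAdjoint (diagOp a b) := by
  rw [ContinuousLinearMap.isSelfAdjoint_iff_isSymmetric] at *
  intro x y
  simp only [ContinuousLinearMap.coe_coe]
  rw [diagOp_apply, diagOp_apply, WithLp.prod_inner_apply, WithLp.prod_inner_apply]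
  exact congrArg₂ (· + ·) (ha _ _) (hb _ _)

lemma isUnit_of_diagOp {a b : OpS} (h : IsUnit (diagOp a b)) : IsUnit a ∧ IsUnit b := by
  obtain ⟨u, hu⟩ := h
  have h1 : diagOp a b * ↑u⁻¹ = 1 := by rw [← hu]; exact u.mul_inv
  have h2 : (↑u⁻¹ : OpB) * diagOp a b = 1 := by rw [← hu]; exact u.inv_mul
  constructor
  · refine isUnit_iff_exists.mpr ⟨pr1.comp ((↑u⁻¹ : OpB).comp in1), ?_, ?_⟩
    · apply ContinuousLinearMap.ext; intro f
      have hz := congrArg (fun X : OpB => toPair (X (ofPair (f, 0)))) h1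
      simp only [ContinuousLinearMap.mul_apply, ContinuousLinearMap.one_apply,
        diagOp_apply, toPair_ofPair] at hz
      simp only [ContinuousLinearMap.mul_apply, ContinuousLinearMap.one_apply,
        ContinuousLinearMap.coe_comp', Function.comp_apply, in1_apply, pr1_apply]
      exact congrArg Prod.fst hz
    · apply ContinuousLinearMap.ext; intro f
      have hz := congrArg (fun X : OpB => toPair (X (ofPair (f, 0)))) h2
      simp only [ContinuousLinearMap.mul_apply, ContinuousLinearMap.one_apply,
        toPair_ofPair] at hz
      simp only [ContinuousLinearMap.mul_apply, ContinuousLinearMap.one_apply,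
        ContinuousLinearMap.coe_comp', Function.comp_apply, in1_apply, pr1_apply]
      have : diagOp a b (ofPair (f, 0)) = ofPair (a f, 0) := by simp
      rw [this] at hz
      exact congrArg Prod.fst hz
  · refine isUnit_iff_exists.mpr ⟨pr2.comp ((↑u⁻¹ : OpB).comp in2), ?_, ?_⟩
    · apply ContinuousLinearMap.ext; intro f
      have hz := congrArg (fun X : OpB => toPair (X (ofPair (0, f)))) h1
      simp only [ContinuousLinearMap.mul_apply, ContinuousLinearMap.one_apply,
        diagOp_apply, toPair_ofPair] at hz
      simp only [ContinuousLinearMap.mul_apply, ContinuousLinearMap.one_apply,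
        ContinuousLinearMap.coe_comp', Function.comp_apply, in2_apply, pr2_apply]
      exact congrArg Prod.snd hz
    · apply ContinuousLinearMap.ext; intro f
      have hz := congrArg (fun X : OpB => toPair (X (ofPair (0, f)))) h2
      simp only [ContinuousLinearMap.mul_apply, ContinuousLinearMap.one_apply,
        toPair_ofPair] at hz
      simp only [ContinuousLinearMap.mul_apply, ContinuousLinearMap.one_apply,
        ContinuousLinearMap.coe_comp', Function.comp_apply, in2_apply, pr2_apply]
      have : diagOp a b (ofPair (0, f)) = ofPair (0, b f) := by simp
      rw [this] at hz
      exact congrArg Prod.snd hz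

lemma spectrum_fst_subset (a b : OpS) : spectrum ℝ a ⊆ spectrum ℝ (diagOp a b) := by
  intro lam hlam
  rw [spectrum.mem_iff] at hlam ⊢
  intro hunit
  have : algebraMap ℝ OpB lam - diagOp a b
      = diagOp (algebraMap ℝ OpS lam - a) (algebraMap ℝ OpS lam - b) := by
    rw [← diagOp_sub, diagOp_algebraMap]
  rw [this] at hunit
  exact hlam (isUnit_of_diagOp hunit).1

lemma spectrum_snd_subset (a b : OpS) : spectrum ℝ b ⊆ spectrum ℝ (diagOp a b) := by
  intro lam hlam
  rw [spectrum.mem_iff] at hlam ⊢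
  intro hunit
  have : algebraMap ℝ OpB lam - diagOp a b
      = diagOp (algebraMap ℝ OpS lam - a) (algebraMap ℝ OpS lam - b) := by
    rw [← diagOp_sub, diagOp_algebraMap]
  rw [this] at hunit
  exact hlam (isUnit_of_diagOp hunit).2

section Phi

variable {a b : OpS}
variable (ha : IsSelfAdjoint a) (hb : IsSelfAdjoint b)

def incl1 : C(spectrum ℝ a, spectrum ℝ (diagOp a b)) :=
  ⟨Set.inclusion (spectrum_fst_subset a b), continuous_id.subtype_map (spectrum_fst_subset a b)⟩

def incl2 : C(spectrum ℝ b, spectrum ℝ (diagOp a b)) :=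
  ⟨Set.inclusion (spectrum_snd_subset a b), continuous_id.subtype_map (spectrum_snd_subset a b)⟩

set_option maxHeartbeats 1000000 in
set_option synthInstance.maxHeartbeats 400000 in
def Phi : C(spectrum ℝ (diagOp a b), ℝ) →⋆ₐ[ℝ] OpB where
  toFun g := diagOp (cfcHom ha (g.comp (incl1 (a := a) (b := b))))
    (cfcHom hb (g.comp (incl2 (a := a) (b := b))))
  map_one' := by
    simp only [ContinuousMap.one_comp, map_one, diagOp_one]
  map_mul' g g' := by
    simp only [ContinuousMap.mul_comp, map_mul, diagOp_mul]
  map_zero' := by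
    simp only [ContinuousMap.zero_comp, map_zero, diagOp_zero]
  map_add' g g' := by
    simp only [ContinuousMap.add_comp, map_add, diagOp_add]
  commutes' r := by
    have e1 : (algebraMap ℝ C(spectrum ℝ (diagOp a b), ℝ) r).comp (incl1 (a := a) (b := b))
        = algebraMap ℝ C(spectrum ℝ a, ℝ) r := rfl
    have e2 : (algebraMap ℝ C(spectrum ℝ (diagOp a b), ℝ) r).comp (incl2 (a := a) (b := b))
        = algebraMap ℝ C(spectrum ℝ b, ℝ) r := rfl
    simp only [e1, e2, AlgHomClass.commutes, diagOp_algebraMap]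
  map_star' g := by
    have hg : star g = g := by ext x; exact star_trivial _
    rw [hg]
    exact (isSelfAdjoint_diagOp (cfcHom_predicate ha _) (cfcHom_predicate hb _)).star_eq.symm

set_option maxHeartbeats 1000000 in
lemma continuous_Phi : Continuous (Phi ha hb) := by
  show Continuous fun g : C(spectrum ℝ (diagOp a b), ℝ) =>
    in1.comp ((cfcHom ha (g.comp (incl1 (a := a) (b := b)))).comp pr1)
      + in2.comp ((cfcHom hb (g.comp (incl2 (a := a) (b := b)))).comp pr2)
  apply Continuous.add
  · exact continuous_const.clm_comp
      ((((cfcHom_isClosedEmbedding ha).continuous.comp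
        (ContinuousMap.continuous_precomp _))).clm_comp continuous_const)
  · exact continuous_const.clm_comp
      ((((cfcHom_isClosedEmbedding hb).continuous.comp
        (ContinuousMap.continuous_precomp _))).clm_comp continuous_const)

set_option maxHeartbeats 1000000 in
lemma Phi_eq_cfcHom :
    Phi ha hb = cfcHom (isSelfAdjoint_diagOp ha hb) := by
  apply ContinuousMap.UniqueHom.eq_of_continuous_of_map_id
    (spectrum ℝ (diagOp a b)) _ _ (continuous_Phi ha hb)
    (cfcHom_isClosedEmbedding (isSelfAdjoint_diagOp ha hb)).continuous
  rw [cfcHom_id]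
  show diagOp (cfcHom ha _) (cfcHom hb _) = diagOp a b
  have e1 : ((ContinuousMap.id ℝ).restrict (spectrum ℝ (diagOp a b))).comp
      (incl1 (a := a) (b := b)) = (ContinuousMap.id ℝ).restrict (spectrum ℝ a) := rfl
  have e2 : ((ContinuousMap.id ℝ).restrict (spectrum ℝ (diagOp a b))).comp
      (incl2 (a := a) (b := b)) = (ContinuousMap.id ℝ).restrict (spectrum ℝ b) := rfl
  rw [e1, e2, cfcHom_id ha, cfcHom_id hb]

set_option maxHeartbeats 1000000 in
lemma cfc_diagOp (ha : IsSelfAdjoint a) (hb : IsSelfAdjoint b) (f : ℝ → ℝ)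
    (hf : ContinuousOn f (spectrum ℝ (diagOp a b))) :
    cfc f (diagOp a b) = diagOp (cfc f a) (cfc f b) := by
  have hD := isSelfAdjoint_diagOp ha hb
  rw [cfc_apply f _ hD hf, ← Phi_eq_cfcHom ha hb,
    cfc_apply f a ha (hf.mono (spectrum_fst_subset a b)),
    cfc_apply f b hb (hf.mono (spectrum_snd_subset a b))]
  rfl

end Phi

section Conj

@[simp] lemma zeta_zeta (f : smallH) : zeta (zeta f) = f := star_star f

lemma inner_zeta (u v : smallH) : (inner ℂ (zeta u) (zeta v) : ℂ) = inner ℂ v u := by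
  rw [lp.inner_eq_tsum, lp.inner_eq_tsum]
  refine tsum_congr fun i => ?_
  simp only [zeta, lp.star_apply, RCLike.inner_apply, starRingEnd_apply, star_star]
  ring

def conjL (h : OpS) : smallH →ₗ[ℂ] smallH where
  toFun f := zeta (h (zeta f))
  map_add' f g := by simp [zeta, star_add, map_add]
  map_smul' c f := by simp [zeta, star_smul, map_smul]

def conjOp (h : OpS) : OpS :=
  (conjL h).mkContinuous ‖h‖ (fun f => by
    simpa [conjL, zeta, norm_star] using h.le_opNorm (zeta f))

@[simp] lemma conjOp_apply (h : OpS) (f : smallH) : conjOp h f = zeta (h (zeta f)) := rfl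

lemma conjOp_norm_le (h : OpS) : ‖conjOp h‖ ≤ ‖h‖ :=
  (conjL h).mkContinuous_norm_le (norm_nonneg h) _

set_option maxHeartbeats 800000 in
set_option synthInstance.maxHeartbeats 400000 in
def conjHom : OpS →⋆ₐ[ℝ] OpS where
  toFun := conjOp
  map_one' := by ext f; simp
  map_mul' h h' := by
    ext f
    simp [ContinuousLinearMap.mul_apply]
  map_zero' := by ext f; simp [zeta]
  map_add' h h' := by
    ext f
    simp [zeta, star_add]
  commutes' r := by
    refine ContinuousLinearMap.ext fun f => ?_
    show zeta ((r:ℂ) • zeta f) = (r:ℂ) • f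
    simp [zeta, star_smul]
  map_star' h := by
    rw [ContinuousLinearMap.star_eq_adjoint, ContinuousLinearMap.star_eq_adjoint,
      ContinuousLinearMap.eq_adjoint_iff]
    intro x y
    calc (inner ℂ (conjOp (ContinuousLinearMap.adjoint h) x) y : ℂ)
        = inner ℂ (zeta ((ContinuousLinearMap.adjoint h) (zeta x))) (zeta (zeta y)) := by
          rw [zeta_zeta]; rfl
      _ = inner ℂ (zeta y) ((ContinuousLinearMap.adjoint h) (zeta x)) := inner_zeta _ _
      _ = inner ℂ (h (zeta y)) (zeta x) := ContinuousLinearMap.adjoint_inner_right _ _ _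
      _ = inner ℂ (zeta (conjOp h y)) (zeta x) := by rw [conjOp_apply, zeta_zeta]
      _ = inner ℂ x (conjOp h y) := inner_zeta _ _

lemma continuous_conjHom : Continuous (conjHom : OpS →⋆ₐ[ℝ] OpS) :=
  AddMonoidHomClass.continuous_of_bound conjHom 1 (fun h => by
    rw [one_mul]; exact conjOp_norm_le h)

lemma isSelfAdjoint_conjOp {h : OpS} (hh : IsSelfAdjoint h) : IsSelfAdjoint (conjOp h) := by
  have := map_star conjHom h
  rw [hh.star_eq] at this
  exact this.symm

set_option maxHeartbeats 800000 in
set_option synthInstance.maxHeartbeats 400000 in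
lemma cfc_conjOp {k : OpS} (hk : IsSelfAdjoint k) (f : ℝ → ℝ)
    (hf : ContinuousOn f (spectrum ℝ k)) :
    cfc f (conjOp k) = conjOp (cfc f k) := by
  haveI : @IsScalarTower ℝ ℝ OpS Algebra.toSMul Algebra.toSMul Algebra.toSMul := ⟨
    (fun x y z => by
      simp only [smul_eq_mul, Algebra.smul_def, map_mul, mul_assoc])⟩
  exact (StarAlgHomClass.map_cfc (conjHom : OpS →⋆ₐ[ℝ] OpS) f k hf continuous_conjHom hk
    (isSelfAdjoint_conjOp hk)).symm

end Conj

section FermiFn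

def chi (β : ℝ) (x : ℝ) : ℝ := 1 / (1 + Real.exp (-(β * x)))
def psi (β : ℝ) (x : ℝ) : ℝ := 1 / (1 + Real.exp (β * x))
def ginv (β : ℝ) (y : ℝ) : ℝ := (1 / β) * Real.log (y / (1 - y))

lemma chi_cont (β : ℝ) : Continuous (chi β) :=
  continuous_const.div (by fun_prop) (fun x => by positivity)

lemma chi_mem (β x : ℝ) : chi β x ∈ Set.Ioo (0:ℝ) 1 := by
  constructor
  · unfold chi; positivity
  · unfold chi
    rw [div_lt_one (by positivity)]
    linarith [Real.exp_pos (-(β * x))]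

lemma one_sub_psi (β x : ℝ) : 1 - psi β x = chi β x := by
  unfold psi chi
  have h1 : Real.exp (β * x) ≠ 0 := (Real.exp_pos _).ne'
  have h2 : (0:ℝ) < 1 + Real.exp (β * x) := by positivity
  have h3 : (0:ℝ) < 1 + Real.exp (-(β * x)) := by positivity
  rw [Real.exp_neg]
  field_simp
  ring

lemma chi_neg (β x : ℝ) : chi β (-x) = psi β x := by
  unfold chi psi
  ring_nf

lemma ginv_chi {β : ℝ} (hβ : β ≠ 0) (x : ℝ) : ginv β (chi β x) = x := by
  have ht : 0 < Real.exp (-(β * x)) := Real.exp_pos _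
  have h1t : 0 < 1 + Real.exp (-(β * x)) := by positivity
  have hfrac : chi β x / (1 - chi β x) = 1 / Real.exp (-(β * x)) := by
    unfold chi
    rw [one_sub_div h1t.ne']
    have : 1 + Real.exp (-(β * x)) - 1 = Real.exp (-(β * x)) := by ring
    rw [this, div_div_div_eq]
    field_simp
  unfold ginv
  rw [hfrac, Real.log_div one_ne_zero ht.ne', Real.log_one, Real.log_exp]
  field_simp
  ring

lemma ginv_contOn (β : ℝ) : ContinuousOn (ginv β) (Set.Ioo (0:ℝ) 1) := by
  apply continuousOn_const.mul
  apply Real.continuousOn_log.comp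
  · exact ContinuousOn.div continuousOn_id (by fun_prop)
      (fun y hy => by simp only [Set.mem_Ioo] at hy; intro hc; linarith [hy.2, sub_eq_zero.mp hc])
  · intro y hy
    simp only [Set.mem_Ioo] at hy
    simp only [Set.mem_compl_iff, Set.mem_singleton_iff]
    exact (div_pos hy.1 (by linarith)).ne'

end FermiFn

lemma psi_cont (β : ℝ) : Continuous (psi β) :=
  continuous_const.div (by fun_prop) (fun x => by positivity)

@[simp] lemma ofPair_smul (c : ℂ) (p : smallH × smallH) : ofPair (c • p) = c • ofPair p := rfl
@[simp] lemma ofPair_neg (p : smallH × smallH) : ofPair (-p) = -ofPair p := rfl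
@[simp] lemma toPair_smul (c : ℂ) (x : bigH) : toPair (c • x) = c • toPair x := rfl
@[simp] lemma toPair_sub (x y : bigH) : toPair (x - y) = toPair x - toPair y := rfl
@[simp] lemma toPair_neg (x : bigH) : toPair (-x) = -toPair x := rfl
@[simp] lemma toPair_add (x y : bigH) : toPair (x + y) = toPair x + toPair y := rfl

lemma expI_pi_div_two : Complex.exp (Complex.I * ((Real.pi/2 : ℝ) : ℂ)) = Complex.I := by
  rw [mul_comm, Complex.exp_mul_I, ← Complex.ofReal_cos, ← Complex.ofReal_sin,
    Real.cos_pi_div_two, Real.sin_pi_div_two]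
  simp

lemma expmI_pi_div_two : Complex.exp (-(Complex.I * ((Real.pi/2 : ℝ) : ℂ))) = -Complex.I := by
  rw [Complex.exp_neg, expI_pi_div_two, Complex.inv_I]

end Stmt5Aux


lemma Stmt5Aux.Gamma_ofPair (p : smallH × smallH) :
    Gamma (ofPair p) = ofPair (zeta p.2, zeta p.1) := rfl

namespace Stmt5Aux
@[simp] lemma toPair_fst (x : bigH) : (toPair x).1 = x.fst := rfl
@[simp] lemma toPair_snd (x : bigH) : (toPair x).2 = x.snd := rfl
@[simp] lemma ofPair_sub (p q : smallH × smallH) : ofPair (p - q) = ofPair p - ofPair q := rfl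
end Stmt5Aux


open Stmt5Aux

set_option maxHeartbeats 2000000 in
/-- Let `β ≠ 0`, `ρ(x) := 1/(1+e^{−x})` the Fermi–Dirac function, `H` a
bounded selfadjoint operator on `ℌ` with `Γ∘H∘Γ = −H`, and `T := ρ(βH)` via the continuous
functional calculus. Then:
(i) if `T` commutes with all gauge transformations, there is a bounded selfadjoint `h` on `𝔥`
with `H(f, g) = (hf, −ζ(h(ζg)))` for all `(f, g)`;
(ii) conversely, if `H(f, g) = (hf, −ζ(h(ζg)))` for a bounded selfadjoint `h` on `𝔥`, then
`T(f, g) = ((1 − s)f, ζ(s(ζg)))`, where `s := ρ(−βh)`, i.e. `s = ψ(h)` with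
`ψ(x) := 1/(1+e^{βx})`. -/
theorem stmt_5 (β : ℝ) (hβ : β ≠ 0)
    (H : bigH →L[ℂ] bigH) (hH_sa : IsSelfAdjoint H)
    (hH_gamma : ∀ x : bigH, Gamma (H (Gamma x)) = -(H x))
    (T : bigH →L[ℂ] bigH)
    (hT : T = cfc (fun x : ℝ => 1 / (1 + Real.exp (-(β * x)))) H) :
    (GaugeInvariant T →
      ∃ h : smallH →L[ℂ] smallH, IsSelfAdjoint h ∧
        ∀ f g : smallH,
          toPair (H (ofPair (f, g))) = (h f, -zeta (h (zeta g)))) ∧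
    (∀ h : smallH →L[ℂ] smallH, IsSelfAdjoint h →
      (∀ f g : smallH,
        toPair (H (ofPair (f, g))) = (h f, -zeta (h (zeta g)))) →
      ∀ f g : smallH,
        toPair (T (ofPair (f, g))) =
          (((1 : smallH →L[ℂ] smallH) - cfc (fun x : ℝ => 1 / (1 + Real.exp (β * x))) h) f,
            zeta ((cfc (fun x : ℝ => 1 / (1 + Real.exp (β * x))) h) (zeta g)))) := by
  have hT' : T = cfc (chi β) H := hT
  have hχc : Continuous (chi β) := chi_cont β
  constructor
  · -- (i)
    intro hGI
    have hT_sa : IsSelfAdjoint T := by rw [hT']; exact cfc_predicate _ H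
    have h2I : (2 * Complex.I : ℂ) ≠ 0 := by simp [Complex.I_ne_zero]
    have h1 : ∀ g : smallH, (toPair (T (ofPair (0, g)))).1 = 0 := by
      intro g
      have hsp := hGI (Real.pi/2) 0 g
      rw [expI_pi_div_two, expmI_pi_div_two] at hsp
      have e : (ofPair ((Complex.I : ℂ) • (0:smallH), (-Complex.I : ℂ) • g))
          = (-Complex.I) • ofPair (0, g) := by
        rw [← ofPair_smul]; congr 1; simp
      rw [e, map_smul, toPair_smul] at hsp
      have h1' := congrArg Prod.fst hsp
      simp only [Prod.smul_fst] at h1'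
      have h3 : (2 * Complex.I) • (toPair (T (ofPair (0, g)))).1 = 0 := by
        have h4 := sub_eq_zero.mpr h1'.symm
        rw [← sub_smul] at h4
        convert h4 using 2
        ring
      exact (smul_eq_zero.mp h3).resolve_left h2I
    have h2 : ∀ f g : smallH,
        (toPair (T (ofPair (f, g)))).2 = (toPair (T (ofPair (0, g)))).2 := by
      intro f g
      have hsp := hGI (Real.pi/2) f g
      rw [expI_pi_div_two, expmI_pi_div_two] at hsp
      have e : (ofPair ((Complex.I : ℂ) • f, (-Complex.I : ℂ) • g))
          = Complex.I • ofPair (f, g) - (2*Complex.I) • ofPair (0, g) := by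
        rw [← ofPair_smul, ← ofPair_smul, ← ofPair_sub]
        congr 1
        refine Prod.ext ?_ ?_
        · simp
        · show -Complex.I • g = Complex.I • g - (2*Complex.I) • g
          rw [← sub_smul]
          congr 1
          ring
      rw [e, map_sub, map_smul, map_smul, toPair_sub, toPair_smul, toPair_smul] at hsp
      have h2' := congrArg Prod.snd hsp
      simp only [Prod.smul_snd, Prod.snd_sub] at h2'
      have h4 : (2*Complex.I) • (toPair (T (ofPair (0,g)))).2
          = (2*Complex.I) • (toPair (T (ofPair (f,g)))).2 := by
        have h5 : (2*Complex.I) • (toPair (T (ofPair (0,g)))).2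
            = Complex.I • (toPair (T (ofPair (f,g)))).2
              - (-Complex.I) • (toPair (T (ofPair (f,g)))).2 := by
          rw [← h2']; abel
        rw [h5, neg_smul, sub_neg_eq_add, ← add_smul]
        congr 1
        ring
      exact (smul_right_injective _ h2I h4).symm
    have key : ∀ f g : smallH, toPair (T (ofPair (f,g)))
        = ((toPair (T (ofPair (f,0)))).1, (toPair (T (ofPair (0,g)))).2) := by
      intro f g
      have hsplit : toPair (T (ofPair (f,g)))
          = toPair (T (ofPair (f,0))) + toPair (T (ofPair (0,g))) := by
        rw [← toPair_add, ← map_add, ofPair_add]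
        congr 2
        congr 1; refine Prod.ext ?_ ?_ <;> simp
      refine Prod.ext ?_ ?_
      · rw [hsplit]
        show (toPair (T (ofPair (f,0)))).1 + (toPair (T (ofPair (0,g)))).1
            = (toPair (T (ofPair (f,0)))).1
        rw [h1 g, add_zero]
      · rw [h2 f g]
    set aT := pr1.comp (T.comp in1) with haT_def
    set dT := pr2.comp (T.comp in2) with hdT_def
    have haTapp : ∀ u : smallH, aT u = (toPair (T (ofPair (u, 0)))).1 := fun u => rfl
    have hdTapp : ∀ u : smallH, dT u = (toPair (T (ofPair (0, u)))).2 := fun u => rfl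
    have hTd : T = diagOp aT dT := by
      ext x : 1
      rw [diagOp_apply]
      calc T x = ofPair (toPair (T (ofPair (toPair x)))) := rfl
        _ = ofPair (aT (toPair x).1, dT (toPair x).2) := by
            rw [key (toPair x).1 (toPair x).2, haTapp, hdTapp]
    have haT : IsSelfAdjoint aT := by
      rw [ContinuousLinearMap.isSelfAdjoint_iff_isSymmetric]
      intro u v
      have hs := (ContinuousLinearMap.isSelfAdjoint_iff_isSymmetric.mp hT_sa)
        (ofPair (u, 0)) (ofPair (v, 0))
      simp only [ContinuousLinearMap.coe_coe] at hs ⊢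
      rw [WithLp.prod_inner_apply, WithLp.prod_inner_apply] at hs
      simp only [ofLp_ofPair, ofPair_fst, ofPair_snd, inner_zero_left, inner_zero_right, add_zero] at hs
      show (inner ℂ (aT u) v : ℂ) = inner ℂ u (aT v)
      rw [haTapp, haTapp]
      simpa using hs
    have hdT : IsSelfAdjoint dT := by
      rw [ContinuousLinearMap.isSelfAdjoint_iff_isSymmetric]
      intro u v
      have hs := (ContinuousLinearMap.isSelfAdjoint_iff_isSymmetric.mp hT_sa)
        (ofPair (0, u)) (ofPair (0, v))
      simp only [ContinuousLinearMap.coe_coe] at hs ⊢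
      rw [WithLp.prod_inner_apply, WithLp.prod_inner_apply] at hs
      simp only [ofLp_ofPair, ofPair_fst, ofPair_snd, inner_zero_left, inner_zero_right, zero_add] at hs
      show (inner ℂ (dT u) v : ℂ) = inner ℂ u (dT v)
      rw [hdTapp, hdTapp]
      simpa using hs
    have hspecT : spectrum ℝ T ⊆ Set.Ioo (0:ℝ) 1 := by
      rw [hT', cfc_map_spectrum (chi β) H hH_sa hχc.continuousOn]
      rintro y ⟨x, -, rfl⟩
      exact chi_mem β x
    have himg : ContinuousOn (ginv β) (chi β '' spectrum ℝ H) :=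
      (ginv_contOn β).mono (by rintro y ⟨x, -, rfl⟩; exact chi_mem β x)
    have hHT : H = cfc (ginv β) T := by
      have hcomp : cfc (ginv β ∘ chi β) H = cfc (ginv β) (cfc (chi β) H) :=
        cfc_comp (ginv β) (chi β) H hH_sa himg hχc.continuousOn
      have hid : cfc (ginv β ∘ chi β) H = H := by
        calc cfc (ginv β ∘ chi β) H = cfc id H := cfc_congr (fun x _ => ginv_chi hβ x)
          _ = H := cfc_id ℝ H hH_sa
      rw [hT', ← hcomp, hid]
    have hgT : ContinuousOn (ginv β) (spectrum ℝ T) := (ginv_contOn β).mono hspecT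
    have hdiagH : H = diagOp (cfc (ginv β) aT) (cfc (ginv β) dT) := by
      rw [hHT, hTd]
      exact cfc_diagOp haT hdT (ginv β) (by rw [← hTd]; exact hgT)
    refine ⟨cfc (ginv β) aT, cfc_predicate _ aT, ?_⟩
    intro f g
    set h := cfc (ginv β) aT with hh_def
    set k := cfc (ginv β) dT with hk_def
    have hpt : toPair (H (ofPair (f, g))) = (h f, k g) := by
      rw [hdiagH, diagOp_apply', toPair_ofPair]
    have hgam := hH_gamma (ofPair (f, g))
    have hg1 : Gamma (ofPair (f,g)) = ofPair (zeta g, zeta f) := rfl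
    have hg2 : H (ofPair (zeta g, zeta f)) = ofPair (h (zeta g), k (zeta f)) := by
      rw [hdiagH, diagOp_apply']
    have hH3 : H (ofPair (f,g)) = ofPair (h f, k g) := by
      rw [hdiagH, diagOp_apply']
    rw [hg1, hg2, Gamma_ofPair, hH3, ← ofPair_neg] at hgam
    have hsnd := congrArg (fun x => (toPair x).2) hgam
    simp only [toPair_ofPair, Prod.snd_neg] at hsnd
    rw [hpt]
    refine Prod.ext rfl ?_
    show k g = -zeta (h (zeta g))
    rw [hsnd, neg_neg]
  · -- (ii)
    intro h hsa hpt f g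
    have hne : IsSelfAdjoint (-h) := hsa.neg
    have hH' : H = diagOp h (conjOp (-h)) := by
      ext x : 1
      rw [diagOp_apply]
      have hx := hpt (toPair x).1 (toPair x).2
      calc H x = ofPair (toPair (H (ofPair (toPair x)))) := rfl
        _ = ofPair (h (toPair x).1, -zeta (h (zeta (toPair x).2))) := by rw [hx]
        _ = ofPair (h (toPair x).1, conjOp (-h) (toPair x).2) := by
            have e2 : conjOp (-h) (toPair x).2 = -zeta (h (zeta (toPair x).2)) := by
              rw [conjOp_apply]
              simp [zeta, star_neg]
            rw [e2]
    have hT2 : T = diagOp (cfc (chi β) h) (cfc (chi β) (conjOp (-h))) := by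
      rw [hT', hH']
      exact cfc_diagOp hsa (isSelfAdjoint_conjOp hne) (chi β) hχc.continuousOn
    have hc1 : cfc (chi β) (conjOp (-h)) = conjOp (cfc (chi β) (-h)) :=
      cfc_conjOp hne (chi β) hχc.continuousOn
    have hc2 : cfc (chi β) (-h) = cfc (psi β) h := by
      rw [← cfc_comp_neg (chi β) h hχc.continuousOn hsa]
      exact cfc_congr (fun x _ => chi_neg β x)
    have hc3 : cfc (chi β) h = 1 - cfc (psi β) h := by
      have e : cfc (chi β) h = cfc (fun x => 1 - psi β x) h :=
        cfc_congr (fun x _ => (one_sub_psi β x).symm)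
      rw [e, cfc_sub (fun _ => (1:ℝ)) (psi β) h continuousOn_const (psi_cont β).continuousOn,
        cfc_const (1:ℝ) h hsa, map_one]
    rw [hc1, hc2, hc3] at hT2
    show toPair (T (ofPair (f, g))) =
      ((1 - cfc (psi β) h) f, zeta ((cfc (psi β) h) (zeta g)))
    rw [hT2, diagOp_apply', toPair_ofPair]
    rfl
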